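/- arXiv:1201.1348 — 2 statements merged into one kernel-verified Lean document; each statement's English description precedes it below -/
import Mathlib

section
/- Viewing Sym(n) as a reflection group on ℂⁿ by permuting coordinates (reflections being transpositions), every reflection subgroup of Sym(n) is a parabolic subgroup, i.e., every subgroup generated by transpositions is the pointwise stabiliser of a subset of ℂⁿ. -/
/-- A transposition in the symmetric group on `Fin n`. -/
def IsTransposition {n : ℕ} (g : Equiv.Perm (Fin n)) : Prop :=
  ∃ i j : Fin n, i ≠ j ∧ g = Equiv.swap i j

/-- The fixed space in `ℂⁿ` of a subgroup of `Sym(n)` acting by permuting coordinates. -/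
noncomputable def permFixedSpace {n : ℕ} (H : Subgroup (Equiv.Perm (Fin n))) :
    Submodule ℂ (Fin n → ℂ) where
  carrier := {x | ∀ g ∈ H, ∀ i, x (g i) = x i}
  zero_mem' := fun _ _ _ => rfl
  add_mem' := by
    intro a b ha hb g hg i
    simp [Pi.add_apply, ha g hg i, hb g hg i]
  smul_mem' := by
    intro c a ha g hg i
    simp [Pi.smul_apply, ha g hg i]

/-- The rank of a subgroup of `Sym(n)` as a group acting on `ℂⁿ`:
the codimension of its fixed space. -/
noncomputable def permRank {n : ℕ} (H : Subgroup (Equiv.Perm (Fin n))) : ℕ :=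
  n - Module.finrank ℂ (permFixedSpace H)

/-- `H` is a parabolic subgroup of `Sym(n)`: the pointwise stabiliser of a
subset of `ℂⁿ`. -/
def PermIsParabolic {n : ℕ} (H : Subgroup (Equiv.Perm (Fin n))) : Prop :=
  ∃ X : Set (Fin n → ℂ), ∀ g : Equiv.Perm (Fin n),
    g ∈ H ↔ ∀ x ∈ X, ∀ i, x (g i) = x i

lemma swap_mem_closure {n : ℕ} {S : Set (Equiv.Perm (Fin n))}
    (hS : ∀ s ∈ S, IsTransposition s) :
    ∀ h ∈ Subgroup.closure S, ∀ a, Equiv.swap a (h a) ∈ Subgroup.closure S := by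
  intro h hh
  induction hh using Subgroup.closure_induction with
  | mem s hs =>
    intro a
    obtain ⟨i, j, hij, rfl⟩ := hS s hs
    rcases eq_or_ne a i with rfl | hai
    · rw [Equiv.swap_apply_left]
      exact Subgroup.subset_closure hs
    rcases eq_or_ne a j with rfl | haj
    · rw [Equiv.swap_apply_right, Equiv.swap_comm]
      exact Subgroup.subset_closure hs
    · rw [Equiv.swap_apply_of_ne_of_ne hai haj, Equiv.swap_self]
      exact one_mem _
  | one =>
    intro a
    show Equiv.swap a a ∈ _; rw [Equiv.swap_self]; exact one_mem _
  | mul x y hx hy ihx ihy =>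
    intro a
    have h1 : Equiv.swap a (y a) ∈ Subgroup.closure S := ihy a
    have h2 : Equiv.swap (y a) (x (y a)) ∈ Subgroup.closure S := ihx (y a)
    show Equiv.swap a (x (y a)) ∈ Subgroup.closure S
    rcases eq_or_ne a (y a) with hab | hab
    · rw [← hab]; exact ihx a
    rcases eq_or_ne a (x (y a)) with hac | hac
    · rw [← hac, Equiv.swap_self]; exact one_mem _
    rcases eq_or_ne (y a) (x (y a)) with hbc | hbc
    · rw [← hbc]; exact h1
    · have hid : Equiv.swap (y a) a * Equiv.swap (x (y a)) (y a) * Equiv.swap (y a) a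
          = Equiv.swap a (x (y a)) :=
        Equiv.swap_mul_swap_mul_swap hbc.symm hac.symm
      rw [← hid, Equiv.swap_comm (y a) a, Equiv.swap_comm (x (y a)) (y a)]
      exact mul_mem (mul_mem h1 h2) h1
  | inv x hx ih =>
    intro a
    have := ih (x⁻¹ a)
    rw [show x (x⁻¹ a) = a from Equiv.apply_symm_apply x a] at this
    rw [show x⁻¹ a = (x⁻¹ : Equiv.Perm (Fin n)) a from rfl] at this ⊢
    rw [Equiv.swap_comm]
    exact this

lemma mem_closure_of_orbit {n : ℕ} {S : Set (Equiv.Perm (Fin n))}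
    (hS : ∀ s ∈ S, IsTransposition s) :
    ∀ m (g : Equiv.Perm (Fin n)), g.support.card ≤ m →
      (∀ i, ∃ h ∈ Subgroup.closure S, h i = g i) → g ∈ Subgroup.closure S := by
  intro m
  induction m with
  | zero =>
    intro g hg _
    have : g = 1 := by
      rw [← Equiv.Perm.card_support_eq_zero]
      omega
    exact this ▸ one_mem _
  | succ m ih =>
    intro g hcard hg
    rcases eq_or_ne g 1 with rfl | h1
    · exact one_mem _
    obtain ⟨i, hi⟩ : ∃ i, g i ≠ i := by
      by_contra hc
      push_neg at hc
      exact h1 (Equiv.ext hc)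
    obtain ⟨h, hh, hhi⟩ := hg i
    have hs : Equiv.swap i (g i) ∈ Subgroup.closure S :=
      hhi ▸ swap_mem_closure hS h hh i
    set g' := Equiv.swap i (g i) * g with hg'
    have hlt : g'.support.card < g.support.card :=
      Equiv.Perm.card_support_swap_mul hi
    have hg'mem : g' ∈ Subgroup.closure S := by
      refine ih g' (by omega) fun j => ?_
      obtain ⟨k, hk, hkj⟩ := hg j
      exact ⟨Equiv.swap i (g i) * k, mul_mem hs hk, by simp [hg', hkj]⟩
    have : g = Equiv.swap i (g i) * g' := by
      rw [hg', ← mul_assoc, Equiv.swap_mul_self, one_mul]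
    rw [this]
    exact mul_mem hs hg'mem

/-- Every reflection subgroup of `Sym(n)` (a subgroup generated by transpositions),
viewed in the reflection representation on `ℂⁿ`, is a parabolic subgroup: the
pointwise stabiliser of some subset of `ℂⁿ`. -/
theorem reflection_subgroups_of_symmetric_group_are_parabolic
    (n : ℕ) (H : Subgroup (Equiv.Perm (Fin n)))
    (hH : ∃ S : Set (Equiv.Perm (Fin n)),
      (∀ s ∈ S, IsTransposition s) ∧ H = Subgroup.closure S) :
    PermIsParabolic H := by
  obtain ⟨S, hS, rfl⟩ := hH
  classical
  let r : Setoid (Fin n) := MulAction.orbitRel (Subgroup.closure S) (Fin n)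
  let x : Fin n → ℂ := fun i => ((Quotient.mk r i).out.val : ℂ)
  refine ⟨{x}, fun g => ⟨?_, ?_⟩⟩
  · rintro hg y rfl i
    show x (g i) = x i
    have : (Quotient.mk r (g i)) = Quotient.mk r i := by
      apply Quotient.sound
      exact ⟨⟨g, hg⟩, rfl⟩
    simp only [x, this]
  · intro hx
    refine mem_closure_of_orbit hS g.support.card g le_rfl fun i => ?_
    have hxi : x (g i) = x i := hx x rfl i
    have : (Quotient.mk r (g i)) = Quotient.mk r i := by
      apply Quotient.out_injective
      apply Fin.val_injective
      simp only [x] at hxi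
      exact_mod_cast hxi
    obtain ⟨h, hh⟩ := Quotient.exact this
    exact ⟨(h : Equiv.Perm (Fin n)), h.2, hh⟩
end

section
/- Let G be the symmetric group Sym(n) acting on ℂⁿ by permuting coordinates, and let R be a set of n−1 transpositions generating G. Then for every subset S ⊆ R, the subgroup generated by S is a parabolic subgroup of G (i.e., a pointwise stabiliser of a subset of ℂⁿ). -/
open Equiv

private lemma swap_chain {n : ℕ} {H : Subgroup (Perm (Fin n))} {a b c : Fin n}
    (hab : Equiv.swap a b ∈ H) (hbc : Equiv.swap b c ∈ H) : Equiv.swap a c ∈ H := by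
  rcases eq_or_ne a b with rfl | hab'
  · exact hbc
  rcases eq_or_ne b c with rfl | hbc'
  · exact hab
  rcases eq_or_ne a c with rfl | hac
  · simpa [Equiv.swap_self, Equiv.Perm.one_def] using H.one_mem
  have key : Equiv.swap a c = Equiv.swap b c * Equiv.swap a b * (Equiv.swap b c)⁻¹ := by
    have h1 : Equiv.swap b c a = a := Equiv.swap_apply_of_ne_of_ne hab' hac
    have h2 : Equiv.swap b c b = c := Equiv.swap_apply_left b c
    calc Equiv.swap a c = Equiv.swap (Equiv.swap b c a) (Equiv.swap b c b) := by rw [h1, h2]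
    _ = Equiv.swap b c * Equiv.swap a b * (Equiv.swap b c)⁻¹ := Equiv.swap_apply_apply _ _ _
  rw [key]
  exact H.mul_mem (H.mul_mem hbc hab) (H.inv_mem hbc)

private lemma swap_mem_of_mem_closure {n : ℕ} {S : Set (Perm (Fin n))}
    (hS : ∀ s ∈ S, IsTransposition s) {h : Perm (Fin n)}
    (hh : h ∈ Subgroup.closure S) : ∀ i, Equiv.swap i (h i) ∈ Subgroup.closure S := by
  induction hh using Subgroup.closure_induction with
  | mem s hs =>
    intro i
    obtain ⟨a, b, hab, rfl⟩ := hS s hs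
    rcases eq_or_ne i a with rfl | hia
    · rw [Equiv.swap_apply_left]; exact Subgroup.subset_closure hs
    rcases eq_or_ne i b with rfl | hib
    · rw [Equiv.swap_apply_right, Equiv.swap_comm]; exact Subgroup.subset_closure hs
    · rw [Equiv.swap_apply_of_ne_of_ne hia hib]
      simpa [Equiv.swap_self, Equiv.Perm.one_def] using (Subgroup.closure S).one_mem
  | one =>
    intro i
    simpa [Equiv.swap_self, Equiv.Perm.one_def] using (Subgroup.closure S).one_mem
  | mul x y hx hy ihx ihy =>
    intro i
    exact swap_chain (ihy i) (ihx (y i))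
  | inv x hx ihx =>
    intro i
    have := ihx (x⁻¹ i)
    rw [show x (x⁻¹ i) = i from x.apply_symm_apply i] at this
    rwa [Equiv.swap_comm]

private lemma mem_of_swaps_mem {n : ℕ} (H : Subgroup (Perm (Fin n))) (g : Perm (Fin n))
    (hg : ∀ i, Equiv.swap i (g i) ∈ H) : g ∈ H := by
  generalize hc : g.support.card = c
  induction c using Nat.strong_induction_on generalizing g with
  | _ c ih =>
    rcases eq_or_ne g 1 with rfl | hne
    · exact H.one_mem
    obtain ⟨i, hi⟩ : ∃ i, g i ≠ i := by
      by_contra h; push_neg at h; exact hne (Equiv.ext h)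
    set g' := Equiv.swap i (g i) * g with hg'
    have hcard : g'.support.card < c := hc ▸ Equiv.Perm.card_support_swap_mul hi
    have hmem : ∀ j, Equiv.swap j (g' j) ∈ H := by
      intro j
      have h1 : Equiv.swap j (g j) ∈ H := hg j
      have h2 : Equiv.swap (g j) (g' j) ∈ H := by
        simp only [hg', Equiv.Perm.mul_apply]
        rcases eq_or_ne (g j) i with h | h
        · rw [h, Equiv.swap_apply_left]; exact hg i
        rcases eq_or_ne (g j) (g i) with h' | h'
        · rw [h', Equiv.swap_apply_right, Equiv.swap_comm]; exact hg i
        · rw [Equiv.swap_apply_of_ne_of_ne h h']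
          simpa [Equiv.swap_self, Equiv.Perm.one_def] using H.one_mem
      exact swap_chain h1 h2
    have hg'' : g' ∈ H := ih _ hcard g' hmem rfl
    have hgeq : g = Equiv.swap i (g i) * g' := by
      rw [hg', ← mul_assoc, Equiv.swap_mul_self, one_mul]
    rw [hgeq]
    exact H.mul_mem (hg i) hg''

/-- Corollary 2 for `Sym(n)`: if `R` is a set of `n − 1` transpositions generating
`Sym(n)`, then every subset of `R` generates a parabolic subgroup (a pointwise
stabiliser of a subset of `ℂⁿ`). -/
theorem subsets_of_generating_transpositions_generate_parabolics
    (n : ℕ) (R : Finset (Equiv.Perm (Fin n)))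
    (hR : ∀ r ∈ R, IsTransposition r) (hcard : R.card = n - 1)
    (hgen : Subgroup.closure (R : Set (Equiv.Perm (Fin n))) = ⊤) :
    ∀ S ⊆ R, PermIsParabolic (Subgroup.closure (S : Set (Equiv.Perm (Fin n)))) := by
  classical
  intro S hS
  set H := Subgroup.closure (S : Set (Equiv.Perm (Fin n))) with hH
  have hStrans : ∀ s ∈ (S : Set (Equiv.Perm (Fin n))), IsTransposition s :=
    fun s hs => hR s (hS hs)
  refine ⟨{x | ∀ g ∈ H, ∀ i, x (g i) = x i}, fun g => ⟨?_, ?_⟩⟩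
  · intro hg x hx i
    exact hx g hg i
  · intro hfix
    apply mem_of_swaps_mem
    intro i
    set x : Fin n → ℂ := fun j => if Equiv.swap i j ∈ H then 1 else 0 with hx
    have hxmem : x ∈ {x : Fin n → ℂ | ∀ g ∈ H, ∀ i, x (g i) = x i} := by
      intro h hh j
      have h1 : Equiv.swap j (h j) ∈ H := swap_mem_of_mem_closure hStrans hh j
      simp only [hx]
      by_cases hij : Equiv.swap i j ∈ H
      · rw [if_pos hij, if_pos (swap_chain hij h1)]
      · rw [if_neg hij, if_neg ?_]
        intro hc
        rw [Equiv.swap_comm] at h1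
        exact hij (swap_chain hc h1)
    have hgi := hfix x hxmem i
    have hxi : x i = 1 := by
      have : Equiv.swap i i ∈ H := by
        simp only [Equiv.swap_self]
        exact H.one_mem
      simp only [hx]
      rw [if_pos this]
    rw [hxi] at hgi
    by_contra hc
    rw [hx] at hgi
    simp only [if_neg hc] at hgi
    exact zero_ne_one hgi
end
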